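/- Let H be a Hermitian d×d matrix with spectral projections P_E of ranks d_E, let ρ be a d×d density matrix, let ψ ∈ ℂ^d be a unit vector with q_E = ‖P_E ψ‖², and set ρ_{E,E'} = P_E ρ P_{E'}. Suppose ρ is block positive: there exist orthonormal bases {φ_{E,1}, …, φ_{E,d_E}} of the eigenspaces of H such that, for every pair of eigenvalues E, E', the entries ⟨φ_{E,k}, ρ φ_{E',l}⟩ vanish whenever k > min(d_E, d_{E'}) or l > min(d_E, d_{E'}), and the square matrix [⟨φ_{E,k}, ρ φ_{E',l}⟩] for k, l ≤ min(d_E, d_{E'}) is positive semidefinite. Then there exists a quantum channel ℳ whose Kraus operators all commute with H and which attains ⟨ψ| ℳ(ρ) |ψ⟩ = ∑_{E,E'} √(q_E q_{E'}) · ‖ρ_{E,E'}‖₁, where ‖X‖₁ = Tr[√(X†X)]. -/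

import Mathlib

open Matrix
open scoped ComplexOrder

/-- `wt P v = ‖P v‖²`, the weight of the vector `v` on the range of `P`. -/
noncomputable def wt {d : ℕ} (P : Matrix (Fin d) (Fin d) ℂ) (v : Fin d → ℂ) : ℝ :=
  (star (P *ᵥ v) ⬝ᵥ (P *ᵥ v)).re

/-- The trace norm `‖X‖₁ = Tr[√(Xᴴ X)]`. -/
noncomputable def traceNorm {d : ℕ} (X : Matrix (Fin d) (Fin d) ℂ) : ℝ :=
  (((Matrix.posSemidef_conjTranspose_mul_self X).1.eigenvectorUnitary : Matrix (Fin d) (Fin d) ℂ) *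
    diagonal (RCLike.ofReal ∘ Real.sqrt ∘ (Matrix.posSemidef_conjTranspose_mul_self X).1.eigenvalues) *
    (star (Matrix.posSemidef_conjTranspose_mul_self X).1.eigenvectorUnitary : Matrix (Fin d) (Fin d) ℂ)).trace.re

namespace Stmt15Aux

lemma sum_dite_lt {α : Type*} [AddCommMonoid α] {n N : ℕ} (h : n ≤ N) (g : Fin n → α) :
    ∑ k : Fin N, (if hk : (k : ℕ) < n then g ⟨k, hk⟩ else 0) = ∑ k : Fin n, g k := by
  set f : ℕ → α := fun k => if hk : k < n then g ⟨k, hk⟩ else 0 with hf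
  have h1 : ∑ k : Fin N, (if hk : (k : ℕ) < n then g ⟨k, hk⟩ else 0) = ∑ k ∈ Finset.range N, f k :=
    Fin.sum_univ_eq_sum_range f N
  have h2 : ∑ k ∈ Finset.range n, f k = ∑ k ∈ Finset.range N, f k := by
    refine Finset.sum_subset (Finset.range_subset_range.mpr h) ?_
    intro x _ hx
    simp only [Finset.mem_range, not_lt] at hx
    exact dif_neg (not_lt.mpr hx)
  have h3 : ∑ k : Fin n, f k = ∑ k ∈ Finset.range n, f k := Fin.sum_univ_eq_sum_range f n
  rw [h1, ← h2, ← h3]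
  refine Finset.sum_congr rfl fun k _ => ?_
  simp [hf, k.isLt]

lemma sum_trunc {α : Type*} [AddCommMonoid α] {m n : ℕ} (h : m ≤ n) (g : Fin n → α)
    (hg : ∀ k : Fin n, m ≤ (k : ℕ) → g k = 0) :
    ∑ k : Fin n, g k = ∑ k : Fin m, g (Fin.castLE h k) := by
  set f : ℕ → α := fun k => if hk : k < n then g ⟨k, hk⟩ else 0 with hf
  have h1 : ∑ k : Fin n, g k = ∑ k ∈ Finset.range n, f k := by
    rw [← Fin.sum_univ_eq_sum_range f n]
    exact Finset.sum_congr rfl fun k _ => by simp [hf, k.isLt]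
  have h2 : ∑ k ∈ Finset.range m, f k = ∑ k ∈ Finset.range n, f k := by
    refine Finset.sum_subset (Finset.range_subset_range.mpr h) ?_
    intro x hx1 hx2
    simp only [Finset.mem_range, not_lt] at hx1 hx2
    by_cases hxn : x < n
    · simpa [hf, hxn] using hg ⟨x, hxn⟩ hx2
    · simp [hf, hxn]
  have h3 : ∑ k : Fin m, g (Fin.castLE h k) = ∑ k ∈ Finset.range m, f k := by
    rw [← Fin.sum_univ_eq_sum_range f m]
    refine Finset.sum_congr rfl fun k _ => ?_
    simp only [hf]
    rw [dif_pos (lt_of_lt_of_le k.isLt h)]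
    rfl
  rw [h1, ← h2, h3]

variable {n : Type*} [Fintype n]

lemma mul_vecMulVec (A : Matrix n n ℂ) (u v : n → ℂ) :
    A * vecMulVec u v = vecMulVec (A *ᵥ u) v := by
  ext a b
  simp [mul_apply, vecMulVec_apply, mulVec, dotProduct, Finset.sum_mul, mul_assoc]

lemma vecMulVec_mul (u v : n → ℂ) (A : Matrix n n ℂ) :
    vecMulVec u v * A = vecMulVec u (v ᵥ* A) := by
  ext a b
  simp [mul_apply, vecMulVec_apply, vecMul, dotProduct, Finset.mul_sum, mul_assoc]

lemma vecMulVec_mul_vecMulVec (u v w x : n → ℂ) :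
    vecMulVec u v * vecMulVec w x = (v ⬝ᵥ w) • vecMulVec u x := by
  ext a b
  simp only [mul_apply, vecMulVec_apply, Matrix.smul_apply, smul_eq_mul, dotProduct, Finset.sum_mul]
  exact Finset.sum_congr rfl fun y _ => by ring

lemma vecMulVec_mulVec (u v w : n → ℂ) :
    vecMulVec u v *ᵥ w = (v ⬝ᵥ w) • u := by
  ext a
  simp only [mulVec, vecMulVec_apply, dotProduct, Pi.smul_apply, smul_eq_mul, Finset.sum_mul]
  exact Finset.sum_congr rfl fun y _ => by ring

omit [Fintype n] in
lemma conjTranspose_vecMulVec (u v : n → ℂ) :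
    (vecMulVec u (star v))ᴴ = vecMulVec v (star u) := by
  ext a b
  simp [conjTranspose_apply, vecMulVec_apply, mul_comm]

omit [Fintype n] in
lemma vecMulVec_zero' (u : n → ℂ) : vecMulVec u (0 : n → ℂ) = 0 := by
  ext a b; simp [vecMulVec_apply]

omit [Fintype n] in
lemma zero_vecMulVec' (u : n → ℂ) : vecMulVec (0 : n → ℂ) u = 0 := by
  ext a b; simp [vecMulVec_apply]

lemma star_mulVec_dotProduct (A : Matrix n n ℂ) (u v : n → ℂ) :
    star (A *ᵥ u) ⬝ᵥ v = star u ⬝ᵥ (Aᴴ *ᵥ v) := by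
  rw [star_mulVec, ← dotProduct_mulVec]

lemma sum_mulVec {β : Type*} (s : Finset β) (f : β → Matrix n n ℂ) (v : n → ℂ) :
    (∑ b ∈ s, f b) *ᵥ v = ∑ b ∈ s, f b *ᵥ v := by
  ext a
  simp [mulVec, dotProduct, Matrix.sum_apply, Finset.sum_mul]
  rw [Finset.sum_comm]

lemma dotProduct_sum' {β : Type*} (s : Finset β) (v : n → ℂ) (w : β → n → ℂ) :
    v ⬝ᵥ (∑ b ∈ s, w b) = ∑ b ∈ s, v ⬝ᵥ w b := by
  simp [dotProduct, Finset.mul_sum]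
  rw [Finset.sum_comm]

lemma trace_real {m : ℕ} {R : Matrix (Fin m) (Fin m) ℂ} (hR : R.IsHermitian) :
    R.trace = (R.trace.re : ℂ) := by
  have h2 : star R.trace = R.trace := by rw [← trace_conjTranspose, hR.eq]
  exact (Complex.conj_eq_iff_re.mp h2).symm

lemma traceNorm_factor {d m : ℕ} (G F : Matrix (Fin d) (Fin m) ℂ)
    (hG : Gᴴ * G = 1) (hF : Fᴴ * F = 1) {R : Matrix (Fin m) (Fin m) ℂ} (hR : R.PosSemidef) :
    traceNorm (G * R * Fᴴ) = R.trace.re := by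
  set X := G * R * Fᴴ with hX
  set S := F * R * Fᴴ with hS
  have h1 : Xᴴ = F * R * Gᴴ := by
    simp [hX, conjTranspose_mul, hR.1.eq, Matrix.mul_assoc]
  have key : Xᴴ * X = S ^ 2 := by
    rw [h1, pow_two, hX, hS]
    simp only [Matrix.mul_assoc]
    rw [← Matrix.mul_assoc Gᴴ G, hG, ← Matrix.mul_assoc Fᴴ F, hF, Matrix.one_mul]
  have hSpsd : S.PosSemidef := hR.mul_mul_conjTranspose_same F
  have hsqrt : (((Matrix.posSemidef_conjTranspose_mul_self X).1.eigenvectorUnitary : Matrix (Fin d) (Fin d) ℂ) *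
      diagonal (RCLike.ofReal ∘ Real.sqrt ∘ (Matrix.posSemidef_conjTranspose_mul_self X).1.eigenvalues) *
      (star (Matrix.posSemidef_conjTranspose_mul_self X).1.eigenvectorUnitary : Matrix (Fin d) (Fin d) ℂ)) = S := by
    open scoped MatrixOrder in
    have h1 : CFC.sqrt (Xᴴ * X) = S := by
      rw [key]; exact CFC.sqrt_sq S hSpsd.nonneg
    open scoped MatrixOrder in
    rw [← h1, CFC.sqrt_eq_cfc, cfc_nnreal_eq_real _ _ (Matrix.posSemidef_conjTranspose_mul_self X).nonneg,
      (Matrix.posSemidef_conjTranspose_mul_self X).1.cfc_eq, IsHermitian.cfc, Unitary.conjStarAlgAut_apply]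
    congr 3
    funext x
    simp only [Function.comp_apply]
    simp
    rw [max_eq_left ((Matrix.posSemidef_conjTranspose_mul_self X).eigenvalues_nonneg x)]
  have htr : S.trace = R.trace := by
    rw [hS, trace_mul_cycle, hF, Matrix.one_mul]
  rw [traceNorm, hsqrt, htr]

end Stmt15Aux

open Stmt15Aux

/-- **Achievability of the mixed-state fidelity bound for block positive states.** Let `H` be
Hermitian with spectral projections `P i` of rank `dE i`, `ρ` a density matrix, and `ψ` a unit
vector with `q_E = ‖P_E ψ‖²`. Suppose `ρ` is block positive with respect to orthonormal bases
`φb i` of the eigenspaces: the matrix elements `⟨φb i k, ρ (φb j l)⟩` vanish whenever `k` or `l`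
exceeds `min (dE i) (dE j)`, and the remaining square block is positive semidefinite. Then some
quantum channel with Kraus operators commuting with `H` attains
`⟨ψ|ℳ(ρ)|ψ⟩ = ∑_{E,E'} √(q_E q_{E'}) ‖P_E ρ P_{E'}‖₁`. -/
theorem stmt_15 {d : ℕ} {ι : Type} [Fintype ι] [DecidableEq ι]
    (H : Matrix (Fin d) (Fin d) ℂ) (hH : H.IsHermitian)
    (E : ι → ℝ) (hE : Function.Injective E)
    (P : ι → Matrix (Fin d) (Fin d) ℂ)
    (hHerm : ∀ i, (P i).IsHermitian)
    (hIdem : ∀ i, P i * P i = P i)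
    (hOrth : ∀ i j, i ≠ j → P i * P j = 0)
    (hSum : ∑ i, P i = 1)
    (hSpec : H = ∑ i, (E i : ℂ) • P i)
    (ρ : Matrix (Fin d) (Fin d) ℂ) (hρ : ρ.PosSemidef) (hρ1 : ρ.trace = 1)
    (ψ : Fin d → ℂ) (hψ : star ψ ⬝ᵥ ψ = 1)
    (dE : ι → ℕ)
    (φb : (i : ι) → Fin (dE i) → (Fin d → ℂ))
    (hON : ∀ i, ∀ k l : Fin (dE i), star (φb i k) ⬝ᵥ φb i l = if k = l then 1 else 0)
    (hbasis : ∀ i, P i = ∑ k : Fin (dE i), vecMulVec (φb i k) (star (φb i k)))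
    (hvanish : ∀ i j, ∀ (k : Fin (dE i)) (l : Fin (dE j)),
      (min (dE i) (dE j) ≤ (k : ℕ) ∨ min (dE i) (dE j) ≤ (l : ℕ)) →
      star (φb i k) ⬝ᵥ (ρ *ᵥ φb j l) = 0)
    (hblock : ∀ i j, Matrix.PosSemidef (Matrix.of
      (fun (k l : Fin (min (dE i) (dE j))) =>
        star (φb i (Fin.castLE (min_le_left _ _) k)) ⬝ᵥ
          (ρ *ᵥ φb j (Fin.castLE (min_le_right _ _) l))))) :
    ∃ (K : ℕ) (M : Fin K → Matrix (Fin d) (Fin d) ℂ),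
      (∑ k, (M k)ᴴ * M k = 1) ∧ (∀ k, M k * H = H * M k) ∧
      star ψ ⬝ᵥ ((∑ k, M k * ρ * (M k)ᴴ) *ᵥ ψ) =
        ((∑ i, ∑ j, Real.sqrt (wt (P i) ψ * wt (P j) ψ) * traceNorm (P i * ρ * P j) : ℝ) : ℂ) := by
  classical
  -- basic projection facts
  have hPphi : ∀ i (l : Fin (dE i)), P i *ᵥ φb i l = φb i l := by
    intro i l
    rw [hbasis i, Stmt15Aux.sum_mulVec]
    have : ∀ k : Fin (dE i), vecMulVec (φb i k) (star (φb i k)) *ᵥ φb i l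
        = (if k = l then (1 : ℂ) else 0) • φb i k := by
      intro k; rw [Stmt15Aux.vecMulVec_mulVec, hON i k l]
    rw [Finset.sum_congr rfl fun k _ => this k]
    simp [ite_smul]
  have hPphi' : ∀ i j (l : Fin (dE j)), i ≠ j → P i *ᵥ φb j l = 0 := by
    intro i j l hij
    have : P i *ᵥ φb j l = (P i * P j) *ᵥ φb j l := by
      rw [← Matrix.mulVec_mulVec, hPphi j l]
    rw [this, hOrth i j hij, Matrix.zero_mulVec]
  -- facts about the weights q i
  have hq_c : ∀ i, star (P i *ᵥ ψ) ⬝ᵥ (P i *ᵥ ψ) = ((wt (P i) ψ : ℝ) : ℂ) := by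
    intro i
    have hnn : 0 ≤ star (P i *ᵥ ψ) ⬝ᵥ (P i *ᵥ ψ) := dotProduct_star_self_nonneg _
    obtain ⟨-, him⟩ := Complex.nonneg_iff.mp hnn
    exact Complex.ext rfl (by simpa using him.symm)
  have hq_nonneg : ∀ i, 0 ≤ wt (P i) ψ := by
    intro i
    have hnn : 0 ≤ star (P i *ᵥ ψ) ⬝ᵥ (P i *ᵥ ψ) := dotProduct_star_self_nonneg _
    exact (Complex.nonneg_iff.mp hnn).1
  have hq_zero : ∀ i, wt (P i) ψ = 0 → P i *ᵥ ψ = 0 := by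
    intro i h0
    refine dotProduct_star_self_eq_zero.mp ?_
    rw [hq_c i, h0]; simp
  have hPψdot : ∀ i, star ψ ⬝ᵥ (P i *ᵥ ψ) = ((wt (P i) ψ : ℝ) : ℂ) := by
    intro i
    have h1 : P i *ᵥ ψ = P i *ᵥ (P i *ᵥ ψ) := by
      rw [Matrix.mulVec_mulVec, hIdem i]
    calc star ψ ⬝ᵥ (P i *ᵥ ψ) = star ψ ⬝ᵥ ((P i)ᴴ *ᵥ (P i *ᵥ ψ)) := by rw [(hHerm i).eq, ← h1]
      _ = star (P i *ᵥ ψ) ⬝ᵥ (P i *ᵥ ψ) := (star_mulVec_dotProduct _ _ _).symm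
      _ = _ := hq_c i
  -- construction of the unit vectors χ i
  have hchi : ∀ i, ∃ χi : Fin d → ℂ, P i *ᵥ χi = χi ∧ (0 < dE i → star χi ⬝ᵥ χi = 1) ∧
      star ψ ⬝ᵥ χi = ((Real.sqrt (wt (P i) ψ) : ℝ) : ℂ) := by
    intro i
    by_cases hqi : wt (P i) ψ = 0
    · by_cases hd : 0 < dE i
      · refine ⟨φb i ⟨0, hd⟩, hPphi i ⟨0, hd⟩, fun _ => by simpa using hON i ⟨0, hd⟩ ⟨0, hd⟩, ?_⟩
        have h1 : star ψ ⬝ᵥ φb i ⟨0, hd⟩ = star (P i *ᵥ ψ) ⬝ᵥ φb i ⟨0, hd⟩ := by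
          rw [star_mulVec_dotProduct, (hHerm i).eq, hPphi i ⟨0, hd⟩]
        rw [h1, hq_zero i hqi]
        simp [hqi]
      · refine ⟨0, by simp, fun h => absurd h hd, ?_⟩
        simp [hqi]
    · set q := wt (P i) ψ with hqdef
      have hqpos : 0 < q := lt_of_le_of_ne (hq_nonneg i) (Ne.symm hqi)
      have hsq : Real.sqrt q ≠ 0 := by positivity
      refine ⟨((Real.sqrt q : ℝ) : ℂ)⁻¹ • (P i *ᵥ ψ), ?_, ?_, ?_⟩
      · rw [Matrix.mulVec_smul, Matrix.mulVec_mulVec, hIdem i]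
      · intro _
        rw [star_smul, smul_dotProduct, dotProduct_smul, hq_c i]
        simp only [smul_eq_mul, ← hqdef]
        rw [← Complex.ofReal_inv,
          show star (((Real.sqrt q)⁻¹ : ℝ) : ℂ) = (((Real.sqrt q)⁻¹ : ℝ) : ℂ) from Complex.conj_ofReal _,
          ← Complex.ofReal_mul, ← Complex.ofReal_mul]
        norm_cast
        field_simp
        rw [Real.sq_sqrt hqpos.le]
      · rw [dotProduct_smul, hPψdot i]
        simp only [smul_eq_mul]
        rw [← Complex.ofReal_inv, ← Complex.ofReal_mul]
        norm_cast
        rw [inv_mul_eq_div, eq_comm, eq_div_iff hsq, Real.mul_self_sqrt (le_of_lt hqpos)]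

  choose χ hχP hχnorm hψχ using hchi
  have hχψ : ∀ i, star (χ i) ⬝ᵥ ψ = ((Real.sqrt (wt (P i) ψ) : ℝ) : ℂ) := by
    intro i
    rw [star_dotProduct, hψχ i]
    simp
  have hχcross : ∀ i j, i ≠ j → star (χ i) ⬝ᵥ χ j = 0 := by
    intro i j hij
    calc star (χ i) ⬝ᵥ χ j = star (P i *ᵥ χ i) ⬝ᵥ χ j := by rw [hχP i]
      _ = star (χ i) ⬝ᵥ ((P i)ᴴ *ᵥ χ j) := star_mulVec_dotProduct _ _ _
      _ = star (χ i) ⬝ᵥ ((P i * P j) *ᵥ χ j) := by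
          rw [(hHerm i).eq, ← Matrix.mulVec_mulVec, hχP j]
      _ = 0 := by rw [hOrth i j hij, Matrix.zero_mulVec, dotProduct_zero]
  -- the Kraus operators
  set N := Finset.univ.sup dE with hN
  have hdN : ∀ i, dE i ≤ N := fun i => Finset.le_sup (Finset.mem_univ i)
  set T : ι → Fin N → Matrix (Fin d) (Fin d) ℂ := fun i k =>
    if h : (k : ℕ) < dE i then vecMulVec (χ i) (star (φb i ⟨k, h⟩)) else 0 with hT
  refine ⟨N, fun k => ∑ i, T i k, ?_, ?_, ?_⟩
  · -- trace preservation
    have C1 : ∀ (k : Fin N) (i j : ι), (T i k)ᴴ * T j k =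
        if i = j then (if h : (k : ℕ) < dE i then
          vecMulVec (φb i ⟨k, h⟩) (star (φb i ⟨k, h⟩)) else 0) else 0 := by
      intro k i j
      by_cases hij : i = j
      · subst hij
        rw [if_pos rfl]
        simp only [hT]
        by_cases h1 : (k : ℕ) < dE i
        · rw [dif_pos h1, dif_pos h1, Stmt15Aux.conjTranspose_vecMulVec, Stmt15Aux.vecMulVec_mul_vecMulVec,
            hχnorm i (lt_of_le_of_lt (Nat.zero_le _) h1), one_smul]
        · rw [dif_neg h1, dif_neg h1]; simp
      · rw [if_neg hij]
        simp only [hT]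
        by_cases h1 : (k : ℕ) < dE i
        · by_cases h2 : (k : ℕ) < dE j
          · rw [dif_pos h1, dif_pos h2, Stmt15Aux.conjTranspose_vecMulVec, Stmt15Aux.vecMulVec_mul_vecMulVec,
              hχcross i j hij, zero_smul]
          · rw [dif_neg h2]; simp
        · rw [dif_neg h1]; simp
    calc ∑ k : Fin N, (∑ i, T i k)ᴴ * (∑ i, T i k)
        = ∑ k : Fin N, ∑ i, ∑ j, (T i k)ᴴ * T j k := by
          refine Finset.sum_congr rfl fun k _ => ?_
          rw [conjTranspose_sum, Finset.sum_mul]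
          exact Finset.sum_congr rfl fun i _ => Finset.mul_sum _ _ _
      _ = ∑ k : Fin N, ∑ i, (if h : (k : ℕ) < dE i then
            vecMulVec (φb i ⟨k, h⟩) (star (φb i ⟨k, h⟩)) else 0) := by
          refine Finset.sum_congr rfl fun k _ => Finset.sum_congr rfl fun i _ => ?_
          rw [Finset.sum_congr rfl fun j _ => C1 k i j, Finset.sum_ite_eq]
          simp
      _ = ∑ i, ∑ k : Fin N, (if h : (k : ℕ) < dE i then
            vecMulVec (φb i ⟨k, h⟩) (star (φb i ⟨k, h⟩)) else 0) := Finset.sum_comm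
      _ = ∑ i, P i := by
          refine Finset.sum_congr rfl fun i _ => ?_
          rw [sum_dite_lt (hdN i) (fun k : Fin (dE i) => vecMulVec (φb i k) (star (φb i k))),
            ← hbasis i]
      _ = 1 := hSum
  · -- commutation with H
    intro k
    rw [Finset.sum_mul, Finset.mul_sum]
    refine Finset.sum_congr rfl fun i _ => ?_
    simp only [hT]
    by_cases h1 : (k : ℕ) < dE i
    · rw [dif_pos h1]
      have hstar : ∀ j (v : Fin d → ℂ), star v ᵥ* P j = star (P j *ᵥ v) := fun j v => by
        rw [star_mulVec, (hHerm j).eq]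
      have hlhs : vecMulVec (χ i) (star (φb i ⟨k, h1⟩)) * H
          = (E i : ℂ) • vecMulVec (χ i) (star (φb i ⟨k, h1⟩)) := by
        rw [hSpec, Finset.mul_sum]
        have hterm : ∀ j, vecMulVec (χ i) (star (φb i ⟨k, h1⟩)) * ((E j : ℂ) • P j)
            = if j = i then (E i : ℂ) • vecMulVec (χ i) (star (φb i ⟨k, h1⟩)) else 0 := by
          intro j
          rw [mul_smul_comm, Stmt15Aux.vecMulVec_mul, hstar j]
          by_cases hji : j = i
          · subst hji; rw [if_pos rfl, hPphi j ⟨k, h1⟩]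
          · rw [if_neg hji, hPphi' j i ⟨k, h1⟩ hji, star_zero, vecMulVec_zero', smul_zero]
        rw [Finset.sum_congr rfl fun j _ => hterm j, Finset.sum_ite_eq']
        simp
      have hrhs : H * vecMulVec (χ i) (star (φb i ⟨k, h1⟩))
          = (E i : ℂ) • vecMulVec (χ i) (star (φb i ⟨k, h1⟩)) := by
        rw [hSpec, Finset.sum_mul]
        have hterm : ∀ j, ((E j : ℂ) • P j) * vecMulVec (χ i) (star (φb i ⟨k, h1⟩))
            = if j = i then (E i : ℂ) • vecMulVec (χ i) (star (φb i ⟨k, h1⟩)) else 0 := by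
          intro j
          rw [smul_mul_assoc, Stmt15Aux.mul_vecMulVec]
          by_cases hji : j = i
          · subst hji; rw [if_pos rfl, hχP j]
          · have hz : P j *ᵥ χ i = 0 := by
              rw [← hχP i, Matrix.mulVec_mulVec, hOrth j i hji, Matrix.zero_mulVec]
            rw [if_neg hji, hz, zero_vecMulVec', smul_zero]
        rw [Finset.sum_congr rfl fun j _ => hterm j, Finset.sum_ite_eq']
        simp
      rw [hlhs, hrhs]
    · rw [dif_neg h1, Matrix.zero_mul, Matrix.mul_zero]
  · -- the expectation value
    have termB : ∀ (i j : ι) (k : Fin N),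
        star ψ ⬝ᵥ ((T i k * ρ * (T j k)ᴴ) *ᵥ ψ) =
        ((Real.sqrt (wt (P i) ψ) : ℝ) : ℂ) * ((Real.sqrt (wt (P j) ψ) : ℝ) : ℂ) *
          (if h : (k : ℕ) < min (dE i) (dE j) then
            (fun k' : Fin (min (dE i) (dE j)) =>
              star (φb i (Fin.castLE (min_le_left _ _) k')) ⬝ᵥ
                (ρ *ᵥ φb j (Fin.castLE (min_le_right _ _) k'))) ⟨(k : ℕ), h⟩ else 0) := by
      intro i j k
      by_cases h1 : (k : ℕ) < dE i
      · by_cases h2 : (k : ℕ) < dE j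
        · have hmin : (k : ℕ) < min (dE i) (dE j) := lt_min h1 h2
          rw [dif_pos hmin]
          simp only [hT]
          rw [dif_pos h1, dif_pos h2, Stmt15Aux.conjTranspose_vecMulVec, Stmt15Aux.vecMulVec_mul,
            Stmt15Aux.vecMulVec_mul_vecMulVec, ← dotProduct_mulVec, smul_mulVec, dotProduct_smul,
            Stmt15Aux.vecMulVec_mulVec, dotProduct_smul, hχψ j, hψχ i]
          have hc1 : Fin.castLE (min_le_left (dE i) (dE j)) ⟨(k : ℕ), hmin⟩ = ⟨(k : ℕ), h1⟩ := rfl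
          have hc2 : Fin.castLE (min_le_right (dE i) (dE j)) ⟨(k : ℕ), hmin⟩ = ⟨(k : ℕ), h2⟩ := rfl
          simp only [hc1, hc2, smul_eq_mul]
          ring
        · have hmin : ¬ (k : ℕ) < min (dE i) (dE j) := fun hc => h2 (lt_min_iff.mp hc).2
          rw [dif_neg hmin]
          simp only [hT]
          rw [dif_neg h2]
          simp
      · have hmin : ¬ (k : ℕ) < min (dE i) (dE j) := fun hc => h1 (lt_min_iff.mp hc).1
        rw [dif_neg hmin]
        simp only [hT]
        rw [dif_neg h1]
        simp
    have expand : star ψ ⬝ᵥ ((∑ k : Fin N, (∑ i, T i k) * ρ * (∑ i, T i k)ᴴ) *ᵥ ψ)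
        = ∑ i, ∑ j, ∑ k : Fin N, star ψ ⬝ᵥ ((T i k * ρ * (T j k)ᴴ) *ᵥ ψ) := by
      rw [Stmt15Aux.sum_mulVec, dotProduct_sum']
      have hk : ∀ k : Fin N, star ψ ⬝ᵥ (((∑ i, T i k) * ρ * (∑ i, T i k)ᴴ) *ᵥ ψ)
          = ∑ i, ∑ j, star ψ ⬝ᵥ ((T i k * ρ * (T j k)ᴴ) *ᵥ ψ) := by
        intro k
        have : (∑ i, T i k) * ρ * (∑ i, T i k)ᴴ = ∑ i, ∑ j, T i k * ρ * (T j k)ᴴ := by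
          rw [conjTranspose_sum, Finset.mul_sum]
          rw [Finset.sum_comm]
          refine Finset.sum_congr rfl fun j _ => ?_
          rw [Finset.sum_mul, Finset.sum_mul]
        rw [this, Stmt15Aux.sum_mulVec, dotProduct_sum']
        refine Finset.sum_congr rfl fun i _ => ?_
        rw [Stmt15Aux.sum_mulVec, dotProduct_sum']
      rw [Finset.sum_congr rfl fun k _ => hk k, Finset.sum_comm]
      refine Finset.sum_congr rfl fun i _ => Finset.sum_comm
    have hsum_k : ∀ i j, ∑ k : Fin N, star ψ ⬝ᵥ ((T i k * ρ * (T j k)ᴴ) *ᵥ ψ)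
        = ((Real.sqrt (wt (P i) ψ) : ℝ) : ℂ) * ((Real.sqrt (wt (P j) ψ) : ℝ) : ℂ) *
          (Matrix.of fun k l : Fin (min (dE i) (dE j)) =>
            star (φb i (Fin.castLE (min_le_left _ _) k)) ⬝ᵥ
              (ρ *ᵥ φb j (Fin.castLE (min_le_right _ _) l))).trace := by
      intro i j
      rw [Finset.sum_congr rfl fun k _ => termB i j k, ← Finset.mul_sum]
      congr 1
      rw [sum_dite_lt (le_trans (min_le_left _ _) (hdN i))
        (fun k' : Fin (min (dE i) (dE j)) =>
          star (φb i (Fin.castLE (min_le_left _ _) k')) ⬝ᵥ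
            (ρ *ᵥ φb j (Fin.castLE (min_le_right _ _) k')))]
      rw [Matrix.trace]
      simp [Matrix.diag]
    have hTN : ∀ i j, traceNorm (P i * ρ * P j) =
        (Matrix.of fun k l : Fin (min (dE i) (dE j)) =>
          star (φb i (Fin.castLE (min_le_left _ _) k)) ⬝ᵥ
            (ρ *ᵥ φb j (Fin.castLE (min_le_right _ _) l))).trace.re := by
      intro i j
      set G : Matrix (Fin d) (Fin (min (dE i) (dE j))) ℂ :=
        Matrix.of fun a k => φb i (Fin.castLE (min_le_left _ _) k) a with hG
      set F : Matrix (Fin d) (Fin (min (dE i) (dE j))) ℂ :=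
        Matrix.of fun a l => φb j (Fin.castLE (min_le_right _ _) l) a with hF
      have hGG : Gᴴ * G = 1 := by
        ext k k'
        simp only [mul_apply, conjTranspose_apply, hG, Matrix.of_apply, Matrix.one_apply]
        have e1 : ∑ a, star (φb i (Fin.castLE (min_le_left _ _) k) a) *
            φb i (Fin.castLE (min_le_left _ _) k') a
            = star (φb i (Fin.castLE (min_le_left _ _) k)) ⬝ᵥ
              φb i (Fin.castLE (min_le_left _ _) k') := rfl
        rw [e1, hON i]
        simp [Fin.castLE_inj]
      have hFF : Fᴴ * F = 1 := by
        ext k k'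
        simp only [mul_apply, conjTranspose_apply, hF, Matrix.of_apply, Matrix.one_apply]
        have e1 : ∑ a, star (φb j (Fin.castLE (min_le_right _ _) k) a) *
            φb j (Fin.castLE (min_le_right _ _) k') a
            = star (φb j (Fin.castLE (min_le_right _ _) k)) ⬝ᵥ
              φb j (Fin.castLE (min_le_right _ _) k') := rfl
        rw [e1, hON j]
        simp [Fin.castLE_inj]
      have hfac : P i * ρ * P j = G * (Matrix.of fun k l : Fin (min (dE i) (dE j)) =>
          star (φb i (Fin.castLE (min_le_left _ _) k)) ⬝ᵥ
            (ρ *ᵥ φb j (Fin.castLE (min_le_right _ _) l))) * Fᴴ := by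
        rw [hbasis i, hbasis j]
        simp only [Finset.sum_mul, Finset.mul_sum]
        have hterm : ∀ (k : Fin (dE i)) (l : Fin (dE j)),
            vecMulVec (φb i k) (star (φb i k)) * ρ * vecMulVec (φb j l) (star (φb j l))
            = (star (φb i k) ⬝ᵥ (ρ *ᵥ φb j l)) • vecMulVec (φb i k) (star (φb j l)) := by
          intro k l
          rw [Matrix.mul_assoc, Stmt15Aux.mul_vecMulVec, Stmt15Aux.vecMulVec_mul_vecMulVec]
        rw [Finset.sum_comm]
        rw [Finset.sum_congr rfl fun k _ => Finset.sum_congr rfl fun l _ => hterm k l]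
        rw [sum_trunc (min_le_left (dE i) (dE j))
          (fun k => ∑ l, (star (φb i k) ⬝ᵥ (ρ *ᵥ φb j l)) • vecMulVec (φb i k) (star (φb j l)))
          (fun k hk => by
            refine Finset.sum_eq_zero fun l _ => ?_
            rw [hvanish i j k l (Or.inl hk), zero_smul])]
        rw [Finset.sum_congr rfl fun k _ => sum_trunc (min_le_right (dE i) (dE j))
          (fun l => (star (φb i (Fin.castLE (min_le_left _ _) k)) ⬝ᵥ (ρ *ᵥ φb j l)) •
            vecMulVec (φb i (Fin.castLE (min_le_left _ _) k)) (star (φb j l)))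
          (fun l hl => by
            beta_reduce
            rw [hvanish i j _ l (Or.inr hl), zero_smul])]
        ext a b
        simp only [Matrix.sum_apply, Matrix.smul_apply, vecMulVec_apply, smul_eq_mul,
          mul_apply, conjTranspose_apply, hG, hF, Matrix.of_apply, Pi.star_apply]
        rw [Finset.sum_comm]
        refine Finset.sum_congr rfl fun l _ => ?_
        rw [Finset.sum_mul]
        refine Finset.sum_congr rfl fun k _ => ?_
        ring
      rw [hfac, traceNorm_factor G F hGG hFF (hblock i j)]
    have hRHS : ((∑ i, ∑ j, Real.sqrt (wt (P i) ψ * wt (P j) ψ) * traceNorm (P i * ρ * P j) : ℝ) : ℂ)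
        = ∑ i, ∑ j, (((Real.sqrt (wt (P i) ψ) : ℝ) : ℂ) * ((Real.sqrt (wt (P j) ψ) : ℝ) : ℂ) *
            ((traceNorm (P i * ρ * P j) : ℝ) : ℂ)) := by
      push_cast
      refine Finset.sum_congr rfl fun i _ => Finset.sum_congr rfl fun j _ => ?_
      rw [Real.sqrt_mul (hq_nonneg i)]
      push_cast
      ring
    rw [expand, hRHS]
    refine Finset.sum_congr rfl fun i _ => Finset.sum_congr rfl fun j _ => ?_
    rw [hsum_k i j, trace_real (hblock i j).1, hTN i j]
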